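/- If a set of paths satisfies (1) no path π_i uses the goal vertex g_j of another agent a_j (except possibly when s_i = g_j and only at the start), and (2) there exist no potential cyclic deadlocks, then the set of paths is a feasible OTIMAPP solution. -/

import Mathlib

open scoped Classical

/-- An OTIMAPP path set: `n` agents, agent `i` follows the path
`loc i 0, loc i 1, ..., loc i (L i)`; `loc i 0` is its start and `loc i (L i)` its goal. -/
structure OTI (V : Type) (n : ℕ) where
  L : Fin n → ℕ
  loc : Fin n → ℕ → V

namespace OTI

variable {V : Type} {n : ℕ}

/-- Activation of agent `i` in configuration `c` (clocks): the agent advances iff it is not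
at the end of its path and its next vertex is unoccupied. -/
noncomputable def step (P : OTI V n) (c : Fin n → ℕ) (i : Fin n) : Fin n → ℕ :=
  if c i < P.L i ∧ ∀ j, j ≠ i → P.loc j (c j) ≠ P.loc i (c i + 1)
  then Function.update c i (c i + 1) else c

/-- Configuration after the first `k` activations of execution `e`. -/
noncomputable def run (P : OTI V n) (e : ℕ → Fin n) : ℕ → Fin n → ℕ
  | 0 => fun _ => 0
  | k + 1 => P.step (P.run e k) (e k)

/-- An execution is fair when every agent is activated infinitely often. -/
def Fair (e : ℕ → Fin n) : Prop := ∀ (i : Fin n) (k : ℕ), ∃ m, k ≤ m ∧ e m = i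

/-- All agents reach their goals after finitely many activations. -/
def Terminates (P : OTI V n) (e : ℕ → Fin n) : Prop :=
  ∃ k, ∀ i, P.run e k i = P.L i

/-- A feasible OTIMAPP solution: every fair execution terminates. -/
def Feasible (P : OTI V n) : Prop := ∀ e, Fair e → P.Terminates e

/-- A configuration (assignment of clocks) is reachable by some execution. -/
def Reachable (P : OTI V n) (c : Fin n → ℕ) : Prop := ∃ e k, P.run e k = c

/-- A potential cyclic deadlock: distinct agents `σ 0, …, σ k` with clock values `t`
such that each agent's next vertex is the next agent's current vertex, cyclically. -/
def PotentialCyclic (P : OTI V n) {k : ℕ} (σ : Fin (k + 1) → Fin n)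
    (t : Fin (k + 1) → ℕ) : Prop :=
  Function.Injective σ ∧ (∀ m, t m < P.L (σ m)) ∧
    ∀ m, P.loc (σ m) (t m + 1) = P.loc (σ (m + 1)) (t (m + 1))

/-- A reachable cyclic deadlock: a potential cyclic deadlock whose clock values are realized
by some reachable configuration. -/
def ReachableCyclic (P : OTI V n) {k : ℕ} (σ : Fin (k + 1) → Fin n)
    (t : Fin (k + 1) → ℕ) : Prop :=
  P.PotentialCyclic σ t ∧ ∃ c, P.Reachable c ∧ ∀ m, c (σ m) = t m

/-- A potential terminal deadlock `(i, j, tj)`: agent `i`'s goal lies on `j`'s path. -/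
def PotentialTerminal (P : OTI V n) (i j : Fin n) (tj : ℕ) : Prop :=
  i ≠ j ∧ tj ≤ P.L j ∧ P.loc i (P.L i) = P.loc j tj

/-- A reachable terminal deadlock: some execution puts `i` at its goal and `j` at clock `tj - 1`. -/
def ReachableTerminal (P : OTI V n) (i j : Fin n) (tj : ℕ) : Prop :=
  P.PotentialTerminal i j tj ∧ ∃ c, P.Reachable c ∧ c i = P.L i ∧ c j + 1 = tj

/-- The path set is a set of paths on graph `G` with starts `s` and goals `g`. -/
def OnGraph (P : OTI V n) (G : SimpleGraph V) (s g : Fin n → V) : Prop :=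
  (∀ i, P.loc i 0 = s i) ∧ (∀ i, P.loc i (P.L i) = g i) ∧
    ∀ i t, t < P.L i → G.Adj (P.loc i t) (P.loc i (t + 1))

/-- A fragment: a nonempty chain of (agent, clock) pairs with distinct agents, where each
agent's next vertex equals the next agent's current vertex. -/
def IsFragment (P : OTI V n) (l : List (Fin n × ℕ)) : Prop :=
  l ≠ [] ∧ (l.map Prod.fst).Nodup ∧ (∀ p ∈ l, p.2 < P.L p.1) ∧
    l.Chain' fun p q => P.loc p.1 (p.2 + 1) = P.loc q.1 q.2

/-- The vertex a fragment starts from. -/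
def fragStart (P : OTI V n) (l : List (Fin n × ℕ)) : Option V :=
  l.head?.map fun p => P.loc p.1 p.2

/-- The vertex a fragment ends at. -/
def fragEnd (P : OTI V n) (l : List (Fin n × ℕ)) : Option V :=
  l.getLast?.map fun p => P.loc p.1 (p.2 + 1)

end OTI

namespace OTIProof

open OTI

variable {V : Type} {n : ℕ}

lemma step_cases (P : OTI V n) (c : Fin n → ℕ) (i : Fin n) :
    P.step c i = c ∨
      ((c i < P.L i ∧ ∀ j, j ≠ i → P.loc j (c j) ≠ P.loc i (c i + 1)) ∧
        P.step c i = Function.update c i (c i + 1)) := by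
  unfold OTI.step
  by_cases h : c i < P.L i ∧ ∀ j, j ≠ i → P.loc j (c j) ≠ P.loc i (c i + 1)
  · exact Or.inr ⟨h, if_pos h⟩
  · exact Or.inl (if_neg h)

lemma run_le (P : OTI V n) (e : ℕ → Fin n) (k : ℕ) (i : Fin n) :
    P.run e k i ≤ P.L i := by
  induction k with
  | zero => simp [OTI.run]
  | succ k ih =>
    show P.step (P.run e k) (e k) i ≤ P.L i
    rcases step_cases P (P.run e k) (e k) with h | ⟨⟨h1, _⟩, h2⟩
    · rw [h]; exact ih
    · rw [h2]
      rcases eq_or_ne i (e k) with rfl | hne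
      · simpa using h1
      · rw [Function.update_of_ne hne]; exact ih

lemma run_mono (P : OTI V n) (e : ℕ → Fin n) (k : ℕ) (i : Fin n) :
    P.run e k i ≤ P.run e (k + 1) i := by
  show P.run e k i ≤ P.step (P.run e k) (e k) i
  rcases step_cases P (P.run e k) (e k) with h | ⟨_, h2⟩
  · rw [h]
  · rw [h2]
    rcases eq_or_ne i (e k) with rfl | hne
    · simp
    · rw [Function.update_of_ne hne]

lemma sum_step (P : OTI V n) (c : Fin n → ℕ) (i : Fin n)
    (h : P.step c i ≠ c) : ∑ j, P.step c i j = (∑ j, c j) + 1 := by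
  rcases step_cases P c i with h' | ⟨_, h2⟩
  · exact absurd h' h
  · rw [h2, Finset.sum_update_of_mem (Finset.mem_univ i),
      Finset.sdiff_singleton_eq_erase]
    have h3 := Finset.add_sum_erase Finset.univ c (Finset.mem_univ i)
    omega

/-- Stabilization of a monotone bounded ℕ-sequence. -/
lemma stabilize (f : ℕ → ℕ) (hf : Monotone f) (B : ℕ) (hB : ∀ k, f k ≤ B) :
    ∃ K, ∀ m, K ≤ m → f m = f K := by
  have hne : (Set.range fun k => B - f k).Nonempty := ⟨B - f 0, 0, rfl⟩
  obtain ⟨K, hK⟩ := Nat.sInf_mem hne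
  refine ⟨K, fun m hm => ?_⟩
  have h1 : B - f m ≤ B - f K := Nat.sub_le_sub_left (hf hm) B
  have hK' : B - f K = sInf (Set.range fun k => B - f k) := hK
  have h2 : B - f K ≤ B - f m := by rw [hK']; exact Nat.sInf_le ⟨m, rfl⟩
  have : B - f m = B - f K := le_antisymm h1 h2
  have := congrArg (B - ·) this
  simpa [Nat.sub_sub_self (hB m), Nat.sub_sub_self (hB K)] using this

theorem main (P : OTI V n)
    (h1 : ∀ i j : Fin n, i ≠ j → ∀ t, t ≤ P.L i →
      P.loc i t = P.loc j (P.L j) → t = 0)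
    (h2 : ∀ (k : ℕ) (σ : Fin (k + 1) → Fin n) (t : Fin (k + 1) → ℕ),
      ¬ P.PotentialCyclic σ t) :
    P.Feasible := by
  intro e he
  set S : ℕ → ℕ := fun k => ∑ j, P.run e k j with hS
  have hmono : Monotone S := by
    apply monotone_nat_of_le_succ
    intro k
    exact Finset.sum_le_sum fun i _ => run_mono P e k i
  have hbd : ∀ k, S k ≤ ∑ j, P.L j :=
    fun k => Finset.sum_le_sum fun i _ => run_le P e k i
  obtain ⟨K, hK⟩ := stabilize S hmono _ hbd
  -- the configuration is constant from K on
  have hconst : ∀ m, K ≤ m → P.run e m = P.run e K := by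
    intro m hm
    induction m with
    | zero => simpa [Nat.le_zero.mp hm]
    | succ m ih =>
      rcases Nat.lt_or_ge K (m + 1) with hlt | hge
      · have hmK : K ≤ m := Nat.lt_succ_iff.mp hlt
        have hrm := ih hmK
        by_contra hne
        have hstep : P.step (P.run e m) (e m) ≠ P.run e m := by
          intro hh
          exact hne (by rw [show P.run e (m+1) = P.step (P.run e m) (e m) from rfl, hh, hrm])
        have : S (m + 1) = S m + 1 := by
          exact sum_step P (P.run e m) (e m) hstep
        have h1' := hK m hmK
        have h2' := hK (m + 1) (le_of_lt hlt)
        omega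
      · have : m + 1 = K := le_antisymm hge hm
        rw [this]
  set c : Fin n → ℕ := P.run e K with hc
  -- if c is final we are done
  by_cases hfin : ∀ i, c i = P.L i
  · exact ⟨K, hfin⟩
  -- otherwise build blockers
  push_neg at hfin
  obtain ⟨i0, hi0⟩ := hfin
  have hi0' : c i0 < P.L i0 := lt_of_le_of_ne (run_le P e K i0) hi0
  have blocker : ∀ i : Fin n, c i < P.L i →
      ∃ j, j ≠ i ∧ c j < P.L j ∧ P.loc j (c j) = P.loc i (c i + 1) := by
    intro i hi
    obtain ⟨m, hm, hem⟩ := he i K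
    have hrm : P.run e m = c := hconst m hm
    have hrm1 : P.run e (m + 1) = c := hconst (m + 1) (le_trans hm (Nat.le_succ m))
    have hstep : P.step c i = c := by
      have : P.run e (m + 1) = P.step (P.run e m) (e m) := rfl
      rw [hrm, hem] at this
      rw [← this, hrm1]
    rcases step_cases P c i with h | ⟨⟨_, hfree⟩, hupd⟩
    · -- the condition failed
      unfold OTI.step at h
      by_cases hcond : c i < P.L i ∧ ∀ j, j ≠ i → P.loc j (c j) ≠ P.loc i (c i + 1)
      · exfalso
        rw [if_pos hcond] at h
        have := congrFun h i
        simp at this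
      · push_neg at hcond
        obtain ⟨j, hji, hj⟩ := hcond hi
        refine ⟨j, hji, ?_, hj⟩
        rcases lt_or_eq_of_le (run_le P e K j) with h' | h'
        · exact h'
        · exfalso
          have h'' : c j = P.L j := h'
          have := h1 i j (Ne.symm hji) (c i + 1) hi (by rw [← hj, h''])
          omega
    · exfalso
      rw [hupd] at hstep
      have := congrFun hstep i
      simp at this
  -- the set of unfinished agents with the blocker self-map
  let T := {i : Fin n // c i < P.L i}
  let f : T → T := fun i =>
    ⟨(blocker i.1 i.2).choose, ((blocker i.1 i.2).choose_spec).2.1⟩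
  have hf_ne : ∀ i : T, (f i).1 ≠ i.1 := fun i => ((blocker i.1 i.2).choose_spec).1
  have hf_loc : ∀ i : T, P.loc (f i).1 (c (f i).1) = P.loc i.1 (c i.1 + 1) :=
    fun i => ((blocker i.1 i.2).choose_spec).2.2
  haveI : Finite T := Subtype.finite
  -- find a periodic point of f
  obtain ⟨a, b, hab, heq⟩ :=
    Finite.exists_ne_map_eq_of_infinite (fun k : ℕ => f^[k] ⟨i0, hi0'⟩)
  wlog hab' : a < b generalizing a b
  · exact this b a hab.symm heq.symm (by omega)
  set x : T := f^[a] ⟨i0, hi0'⟩ with hx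
  have hper : Function.IsPeriodicPt f (b - a) x := by
    show f^[b - a] x = x
    rw [hx, ← Function.iterate_add_apply]
    have : b - a + a = b := by omega
    rw [this]
    exact heq.symm
  have hppos : 0 < Function.minimalPeriod f x :=
    hper.minimalPeriod_pos (by omega)
  set p := Function.minimalPeriod f x with hp
  -- build the cyclic deadlock
  refine absurd ?_ (h2 (p - 1)
    (fun m => (f^[(m : ℕ)] x).1) (fun m => c (f^[(m : ℕ)] x).1))
  have hp1 : p - 1 + 1 = p := by omega
  refine ⟨?_, fun m => (f^[(m : ℕ)] x).2, fun m => ?_⟩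
  · intro m m' hmm
    have hm : (m : ℕ) < p := by have := m.2; omega
    have hm' : (m' : ℕ) < p := by have := m'.2; omega
    have : f^[(m : ℕ)] x = f^[(m' : ℕ)] x := Subtype.ext hmm
    exact Fin.ext (Function.iterate_injOn_Iio_minimalPeriod hm hm' this)
  · have hnext : f^[((m + 1 : Fin (p - 1 + 1)) : ℕ)] x = f^[(m : ℕ) + 1] x := by
      have hmod : ((m + 1 : Fin (p - 1 + 1)) : ℕ) = ((m : ℕ) + 1) % p := by
        simp [Fin.add_def, hp1]
      rw [hmod]
      exact Function.iterate_mod_minimalPeriod_eq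
    show P.loc (f^[(m : ℕ)] x).1 (c (f^[(m : ℕ)] x).1 + 1) =
      P.loc (f^[((m + 1 : Fin (p - 1 + 1)) : ℕ)] x).1 (c (f^[((m + 1 : Fin (p - 1 + 1)) : ℕ)] x).1)
    rw [hnext, Function.iterate_succ_apply']
    exact (hf_loc (f^[(m : ℕ)] x)).symm

end OTIProof

/-- relaxed sufficient condition: if no path uses another agent's goal (except
possibly at its start when `s_i = g_j`) and there are no potential cyclic deadlocks, then the
path set is a feasible OTIMAPP solution. -/
theorem relaxed_sufficient_condition {V : Type} {n : ℕ} (P : OTI V n)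
    (hs : Function.Injective fun i => P.loc i 0)
    (hg : Function.Injective fun i => P.loc i (P.L i))
    (h1 : ∀ i j : Fin n, i ≠ j → ∀ t, t ≤ P.L i →
      P.loc i t = P.loc j (P.L j) → t = 0)
    (h2 : ∀ (k : ℕ) (σ : Fin (k + 1) → Fin n) (t : Fin (k + 1) → ℕ),
      ¬ P.PotentialCyclic σ t) :
    P.Feasible := OTIProof.main P h1 h2
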